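/- For every r ≥ 0 with r ≠ R₁, the function f is twice differentiable at r (with the one-sided derivative at r = 0) and satisfies the differential inequality f''(r) − r κ(r) f'(r)/4 ≤ −c f(r)/2. -/

import Mathlib

open MeasureTheory Real Set
open scoped RealInnerProductSpace

/-- `φ(r) = exp(−(1/4) ∫₀^r s κ₋(s) ds)` where `κ₋ = max(0, −κ)`. -/
noncomputable def phiF (κ : ℝ → ℝ) (r : ℝ) : ℝ :=
  Real.exp (-(1 / 4) * ∫ s in (0:ℝ)..r, s * max 0 (-κ s))

/-- `Φ(r) = ∫₀^r φ(s) ds`. -/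
noncomputable def PhiF (κ : ℝ → ℝ) (r : ℝ) : ℝ := ∫ s in (0:ℝ)..r, phiF κ s

/-- `R₀ = inf {s ≥ 0 : κ(r) ≥ 0 for all r ≥ s}`. -/
noncomputable def R0 (κ : ℝ → ℝ) : ℝ := sInf {s : ℝ | 0 ≤ s ∧ ∀ r, s ≤ r → 0 ≤ κ r}

/-- `R₁ = inf {s ≥ R₀ : s(s − R₀)κ(r) ≥ 8 for all r ≥ s}`. -/
noncomputable def R1 (κ : ℝ → ℝ) : ℝ :=
  sInf {s : ℝ | R0 κ ≤ s ∧ ∀ r, s ≤ r → 8 ≤ s * (s - R0 κ) * κ r}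

/-- `c = (∫₀^{R₁} Φ(s) φ(s)⁻¹ ds)⁻¹`. -/
noncomputable def cF (κ : ℝ → ℝ) : ℝ := (∫ s in (0:ℝ)..R1 κ, PhiF κ s / phiF κ s)⁻¹

/-- `g(r) = 1 − (c/2) ∫₀^{min(r,R₁)} Φ(s) φ(s)⁻¹ ds`. -/
noncomputable def gF (κ : ℝ → ℝ) (r : ℝ) : ℝ :=
  1 - cF κ / 2 * ∫ s in (0:ℝ)..min r (R1 κ), PhiF κ s / phiF κ s

/-- `f(r) = ∫₀^r φ(s) g(s) ds`. -/
noncomputable def fF (κ : ℝ → ℝ) (r : ℝ) : ℝ := ∫ s in (0:ℝ)..r, phiF κ s * gF κ s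

section Aux

open intervalIntegral Filter Topology

variable {κ : ℝ → ℝ}

/-! ### R0 / R1 facts -/

lemma T_nonempty (hκliminf : ∃ ε > (0 : ℝ), ∃ R : ℝ, ∀ r ≥ R, ε ≤ κ r) :
    {s : ℝ | 0 ≤ s ∧ ∀ r, s ≤ r → 0 ≤ κ r}.Nonempty := by
  obtain ⟨ε, hε, R, hR⟩ := hκliminf
  exact ⟨max R 0, le_max_right _ _, fun r hr => le_trans hε.le (hR r (le_trans (le_max_left _ _) hr))⟩

lemma T_bdd : BddBelow {s : ℝ | 0 ≤ s ∧ ∀ r, s ≤ r → 0 ≤ κ r} := ⟨0, fun s hs => hs.1⟩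

lemma R0_nonneg (hκliminf : ∃ ε > (0 : ℝ), ∃ R : ℝ, ∀ r ≥ R, ε ≤ κ r) : 0 ≤ R0 κ :=
  le_csInf (T_nonempty hκliminf) fun s hs => hs.1

lemma S_nonempty (hκliminf : ∃ ε > (0 : ℝ), ∃ R : ℝ, ∀ r ≥ R, ε ≤ κ r) :
    {s : ℝ | R0 κ ≤ s ∧ ∀ r, s ≤ r → 8 ≤ s * (s - R0 κ) * κ r}.Nonempty := by
  obtain ⟨ε, hε, R, hR⟩ := hκliminf
  refine ⟨max (max R (R0 κ + 1)) (8 / ε),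
    le_trans (by linarith [le_max_right R (R0 κ + 1)]) (le_max_left _ _), fun r hr => ?_⟩
  set s := max (max R (R0 κ + 1)) (8 / ε) with hs
  have h1 : R ≤ s := le_trans (le_max_left _ _) (le_max_left _ _)
  have h2 : R0 κ + 1 ≤ s := le_trans (le_max_right _ _) (le_max_left _ _)
  have h3 : 8 / ε ≤ s := le_max_right _ _
  have hκr : ε ≤ κ r := hR r (le_trans h1 hr)
  have h4 : 8 / ε * ε = 8 := div_mul_cancel₀ _ (ne_of_gt hε)
  have h5 : 1 ≤ s - R0 κ := by linarith
  have h6 : 8 / ε ≤ s * (s - R0 κ) := by nlinarith [div_nonneg (by norm_num : (0:ℝ) ≤ 8) hε.le]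
  calc (8:ℝ) = 8 / ε * ε := h4.symm
  _ ≤ s * (s - R0 κ) * κ r := by
      apply mul_le_mul h6 hκr hε.le
      nlinarith [div_nonneg (by norm_num : (0:ℝ) ≤ 8) hε.le]

lemma S_bdd : BddBelow {s : ℝ | R0 κ ≤ s ∧ ∀ r, s ≤ r → 8 ≤ s * (s - R0 κ) * κ r} :=
  ⟨R0 κ, fun s hs => hs.1⟩

lemma R1_ge_R0 (hκliminf : ∃ ε > (0 : ℝ), ∃ R : ℝ, ∀ r ≥ R, ε ≤ κ r) : R0 κ ≤ R1 κ :=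
  le_csInf (S_nonempty hκliminf) fun s hs => hs.1

lemma key_kappa (hκliminf : ∃ ε > (0 : ℝ), ∃ R : ℝ, ∀ r ≥ R, ε ≤ κ r)
    {r : ℝ} (hr : R1 κ < r) : 8 ≤ R1 κ * (R1 κ - R0 κ) * κ r := by
  have hR0 : 0 ≤ R0 κ := R0_nonneg hκliminf
  have hIoo : ∀ s ∈ Ioo (R1 κ) r, 8 ≤ s * (s - R0 κ) * κ r := by
    intro s hs
    obtain ⟨t, ht, hts⟩ := exists_lt_of_csInf_lt (S_nonempty hκliminf) hs.1
    have htR1 : R1 κ ≤ t := csInf_le S_bdd ht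
    have h8 : 8 ≤ t * (t - R0 κ) * κ r := ht.2 r (by linarith [hs.2])
    have htR0 : R0 κ ≤ t := ht.1
    have ht0 : 0 ≤ t := le_trans hR0 htR0
    have hκpos : 0 < κ r := by nlinarith [mul_nonneg ht0 (sub_nonneg.2 htR0)]
    nlinarith [mul_nonneg (mul_nonneg (sub_nonneg.2 hts.le)
      (by linarith : (0:ℝ) ≤ s + t - R0 κ)) hκpos.le]
  have hcont : ContinuousAt (fun s => s * (s - R0 κ) * κ r) (R1 κ) := by fun_prop
  have htend : Tendsto (fun s => s * (s - R0 κ) * κ r) (nhdsWithin (R1 κ) (Ioi (R1 κ)))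
      (nhds (R1 κ * (R1 κ - R0 κ) * κ r)) := hcont.continuousWithinAt.tendsto
  exact ge_of_tendsto htend (by
    filter_upwards [Ioo_mem_nhdsGT_of_mem ⟨le_refl (R1 κ), hr⟩] with s hs using hIoo s hs)

lemma R0_lt_R1 (hκliminf : ∃ ε > (0 : ℝ), ∃ R : ℝ, ∀ r ≥ R, ε ≤ κ r) : R0 κ < R1 κ := by
  rcases lt_or_ge (R0 κ) (R1 κ) with h | h
  · exact h
  · exfalso
    have he : R1 κ = R0 κ := le_antisymm h (R1_ge_R0 hκliminf)
    have := key_kappa hκliminf (show R1 κ < R1 κ + 1 by linarith)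
    rw [he] at this
    simp at this
    linarith

lemma kappa_pos_of_gt (hκliminf : ∃ ε > (0 : ℝ), ∃ R : ℝ, ∀ r ≥ R, ε ≤ κ r)
    {r : ℝ} (hr : R1 κ < r) : 0 < κ r := by
  have h := key_kappa hκliminf hr
  have h1 := R0_lt_R1 (κ := κ) hκliminf
  have h2 := R0_nonneg (κ := κ) hκliminf
  nlinarith [mul_nonneg (by linarith : (0:ℝ) ≤ R1 κ) (by linarith : (0:ℝ) ≤ R1 κ - R0 κ)]

lemma kappa_nonneg_ge (hκcont : ContinuousOn κ (Set.Ici 0))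
    (hκliminf : ∃ ε > (0 : ℝ), ∃ R : ℝ, ∀ r ≥ R, ε ≤ κ r)
    {r : ℝ} (hr : R0 κ ≤ r) : 0 ≤ κ r := by
  have hR0 : 0 ≤ R0 κ := R0_nonneg hκliminf
  rcases eq_or_lt_of_le hr with h | h
  · subst h
    have hcw : ContinuousWithinAt κ (Ioi (R0 κ)) (R0 κ) :=
      (hκcont (R0 κ) hR0).mono (fun x hx => le_trans hR0 (le_of_lt hx))
    refine ge_of_tendsto hcw.tendsto ?_
    filter_upwards [self_mem_nhdsWithin] with s hs
    obtain ⟨t, ht, hts⟩ := exists_lt_of_csInf_lt (T_nonempty hκliminf) hs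
    exact ht.2 s hts.le
  · obtain ⟨t, ht, htr⟩ := exists_lt_of_csInf_lt (T_nonempty hκliminf) h
    exact ht.2 r htr.le

/-! ### basic calculus facts -/

lemma uIcc_sub {a b : ℝ} (ha : 0 ≤ a) (hb : 0 ≤ b) : uIcc a b ⊆ Ici 0 :=
  fun x hx => le_trans (le_inf ha hb) hx.1

lemma intable {F : ℝ → ℝ} (hF : ContinuousOn F (Ici 0)) {a b : ℝ} (ha : 0 ≤ a) (hb : 0 ≤ b) :
    IntervalIntegrable F volume a b :=
  (hF.mono (uIcc_sub ha hb)).intervalIntegrable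

lemma primitive_hasDerivWithinAt {F : ℝ → ℝ} (hF : ContinuousOn F (Ici 0)) {r : ℝ} (hr : 0 ≤ r) :
    HasDerivWithinAt (fun u => ∫ x in (0:ℝ)..u, F x) (F r) (Ici 0) r := by
  have haes : AEStronglyMeasurable F (volume.restrict (Ici (0:ℝ))) :=
    hF.aestronglyMeasurable measurableSet_Ici
  have hint : IntervalIntegrable F volume 0 r := intable hF le_rfl hr
  rcases eq_or_lt_of_le hr with h0 | h0
  · subst h0
    exact integral_hasDerivWithinAt_right hint
      ⟨Ici 0, mem_of_superset self_mem_nhdsWithin Ioi_subset_Ici_self, haes⟩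
      ((hF 0 (mem_Ici.2 le_rfl)).mono Ioi_subset_Ici_self)
  · have hmem : Ici (0:ℝ) ∈ 𝓝 r := Ici_mem_nhds h0
    have : HasDerivAt (fun u => ∫ x in (0:ℝ)..u, F x) (F r) r := by
      apply integral_hasDerivAt_right hint ⟨Ici 0, hmem, haes⟩
      have := hF r (le_of_lt h0)
      rwa [ContinuousWithinAt, nhdsWithin_eq_nhds.2 hmem] at this
    exact this.hasDerivWithinAt

lemma primitive_contOn {F : ℝ → ℝ} (hF : ContinuousOn F (Ici 0)) :
    ContinuousOn (fun u => ∫ x in (0:ℝ)..u, F x) (Ici 0) :=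
  fun r hr => (primitive_hasDerivWithinAt hF hr).continuousWithinAt

lemma kneg_contOn (hκ : ContinuousOn κ (Ici 0)) :
    ContinuousOn (fun s => s * max 0 (-κ s)) (Ici 0) :=
  continuousOn_id.mul (ContinuousOn.sup continuousOn_const hκ.neg)

lemma phi_pos (κ : ℝ → ℝ) (r : ℝ) : 0 < phiF κ r := exp_pos _

lemma phi_hasDeriv (hκ : ContinuousOn κ (Ici 0)) {r : ℝ} (hr : 0 ≤ r) :
    HasDerivWithinAt (phiF κ) (-(1/4) * (r * max 0 (-κ r)) * phiF κ r) (Ici 0) r := by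
  have h1 := (primitive_hasDerivWithinAt (kneg_contOn hκ) hr).const_mul (-(1/4) : ℝ)
  have h2 := h1.exp
  convert h2 using 1
  · rfl
  · simp only [phiF]; ring

lemma phi_contOn (hκ : ContinuousOn κ (Ici 0)) : ContinuousOn (phiF κ) (Ici 0) :=
  fun r hr => (phi_hasDeriv hκ hr).continuousWithinAt

lemma Phi_hasDeriv (hκ : ContinuousOn κ (Ici 0)) {r : ℝ} (hr : 0 ≤ r) :
    HasDerivWithinAt (PhiF κ) (phiF κ r) (Ici 0) r :=
  primitive_hasDerivWithinAt (phi_contOn hκ) hr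

lemma Phi_contOn (hκ : ContinuousOn κ (Ici 0)) : ContinuousOn (PhiF κ) (Ici 0) :=
  fun r hr => (Phi_hasDeriv hκ hr).continuousWithinAt

lemma q_contOn (hκ : ContinuousOn κ (Ici 0)) :
    ContinuousOn (fun s => PhiF κ s / phiF κ s) (Ici 0) :=
  (Phi_contOn hκ).div (phi_contOn hκ) (fun x _ => (phi_pos κ x).ne')

lemma Phi_nonneg {r : ℝ} (hr : 0 ≤ r) : 0 ≤ PhiF κ r :=
  intervalIntegral.integral_nonneg hr (fun s _ => (phi_pos κ s).le)

lemma Phi_pos (hκ : ContinuousOn κ (Ici 0)) {r : ℝ} (hr : 0 < r) : 0 < PhiF κ r :=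
  intervalIntegral_pos_of_pos_on (intable (phi_contOn hκ) le_rfl hr.le)
    (fun s _ => phi_pos κ s) hr

lemma q_nonneg {r : ℝ} (hr : 0 ≤ r) : 0 ≤ PhiF κ r / phiF κ r :=
  div_nonneg (Phi_nonneg hr) (phi_pos κ r).le

lemma phi_antitone (hκ : ContinuousOn κ (Ici 0)) {a b : ℝ} (ha : 0 ≤ a) (hab : a ≤ b) :
    phiF κ b ≤ phiF κ a := by
  have hb : 0 ≤ b := le_trans ha hab
  have hsplit : (∫ s in (0:ℝ)..b, s * max 0 (-κ s)) =
      (∫ s in (0:ℝ)..a, s * max 0 (-κ s)) + ∫ s in a..b, s * max 0 (-κ s) :=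
    (integral_add_adjacent_intervals (intable (kneg_contOn hκ) le_rfl ha)
      (intable (kneg_contOn hκ) ha hb)).symm
  have hnn : 0 ≤ ∫ s in a..b, s * max 0 (-κ s) :=
    intervalIntegral.integral_nonneg hab
      (fun s hs => mul_nonneg (le_trans ha hs.1) (le_max_left _ _))
  apply exp_le_exp.2
  rw [hsplit]; nlinarith

end Aux
section Aux2

open intervalIntegral Filter Topology

variable {κ : ℝ → ℝ}

lemma phi_const (hκcont : ContinuousOn κ (Set.Ici 0))
    (hκliminf : ∃ ε > (0 : ℝ), ∃ R : ℝ, ∀ r ≥ R, ε ≤ κ r)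
    {r : ℝ} (hr : R0 κ ≤ r) : phiF κ r = phiF κ (R0 κ) := by
  have hR0 : 0 ≤ R0 κ := R0_nonneg hκliminf
  have hr0 : 0 ≤ r := le_trans hR0 hr
  have hzero : ∫ s in R0 κ..r, s * max 0 (-κ s) = 0 := by
    rw [intervalIntegral.integral_congr (g := fun _ => (0:ℝ)) ?_]
    · simp
    · intro s hs
      rw [uIcc_of_le hr] at hs
      have : 0 ≤ κ s := kappa_nonneg_ge hκcont hκliminf hs.1
      simp [max_eq_left (by linarith : -κ s ≤ 0)]
  have hsplit : (∫ s in (0:ℝ)..r, s * max 0 (-κ s)) =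
      (∫ s in (0:ℝ)..R0 κ, s * max 0 (-κ s)) + ∫ s in R0 κ..r, s * max 0 (-κ s) :=
    (integral_add_adjacent_intervals (intable (kneg_contOn hκcont) le_rfl hR0)
      (intable (kneg_contOn hκcont) hR0 hr0)).symm
  unfold phiF
  rw [hsplit, hzero, add_zero]

lemma Phi_affine (hκcont : ContinuousOn κ (Set.Ici 0))
    (hκliminf : ∃ ε > (0 : ℝ), ∃ R : ℝ, ∀ r ≥ R, ε ≤ κ r)
    {r : ℝ} (hr : R0 κ ≤ r) : PhiF κ r = PhiF κ (R0 κ) + (r - R0 κ) * phiF κ (R0 κ) := by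
  have hR0 : 0 ≤ R0 κ := R0_nonneg hκliminf
  have hr0 : 0 ≤ r := le_trans hR0 hr
  have hsplit : PhiF κ r = PhiF κ (R0 κ) + ∫ s in R0 κ..r, phiF κ s :=
    (integral_add_adjacent_intervals (intable (phi_contOn hκcont) le_rfl hR0)
      (intable (phi_contOn hκcont) hR0 hr0)).symm
  have hconst : ∫ s in R0 κ..r, phiF κ s = (r - R0 κ) * phiF κ (R0 κ) := by
    rw [intervalIntegral.integral_congr (g := fun _ => phiF κ (R0 κ)) ?_]
    · simp [smul_eq_mul]
    · intro s hs
      rw [uIcc_of_le hr] at hs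
      exact phi_const hκcont hκliminf hs.1
  rw [hsplit, hconst]

lemma PhiR0_ge (hκcont : ContinuousOn κ (Set.Ici 0))
    (hκliminf : ∃ ε > (0 : ℝ), ∃ R : ℝ, ∀ r ≥ R, ε ≤ κ r) :
    R0 κ * phiF κ (R0 κ) ≤ PhiF κ (R0 κ) := by
  have hR0 : 0 ≤ R0 κ := R0_nonneg hκliminf
  have h := intervalIntegral.integral_mono_on (μ := volume) hR0
    (_root_.intervalIntegrable_const (c := phiF κ (R0 κ)))
    (intable (phi_contOn hκcont) le_rfl hR0)
    (fun s hs => phi_antitone hκcont hs.1 hs.2)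
  simpa [smul_eq_mul, PhiF] using h

lemma K_pos (hκcont : ContinuousOn κ (Set.Ici 0)) (hR1 : 0 < R1 κ) :
    0 < ∫ s in (0:ℝ)..R1 κ, PhiF κ s / phiF κ s := by
  apply intervalIntegral_pos_of_pos_on (intable (q_contOn hκcont) le_rfl hR1.le) _ hR1
  intro s hs
  exact div_pos (Phi_pos hκcont hs.1) (phi_pos κ s)

lemma K_ge (hκcont : ContinuousOn κ (Set.Ici 0))
    (hκliminf : ∃ ε > (0 : ℝ), ∃ R : ℝ, ∀ r ≥ R, ε ≤ κ r) :
    (R1 κ - R0 κ) * (PhiF κ (R0 κ) / phiF κ (R0 κ)) + (R1 κ - R0 κ)^2/2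
      ≤ ∫ s in (0:ℝ)..R1 κ, PhiF κ s / phiF κ s := by
  have hR0 : 0 ≤ R0 κ := R0_nonneg hκliminf
  have hR01 : R0 κ ≤ R1 κ := R1_ge_R0 hκliminf
  have hR1 : 0 ≤ R1 κ := le_trans hR0 hR01
  set A := PhiF κ (R0 κ) / phiF κ (R0 κ) with hA
  have hsplit : (∫ s in (0:ℝ)..R1 κ, PhiF κ s / phiF κ s) =
      (∫ s in (0:ℝ)..R0 κ, PhiF κ s / phiF κ s) + ∫ s in R0 κ..R1 κ, PhiF κ s / phiF κ s :=
    (integral_add_adjacent_intervals (intable (q_contOn hκcont) le_rfl hR0)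
      (intable (q_contOn hκcont) hR0 hR1)).symm
  have h1 : 0 ≤ ∫ s in (0:ℝ)..R0 κ, PhiF κ s / phiF κ s :=
    intervalIntegral.integral_nonneg hR0 (fun s hs => q_nonneg hs.1)
  have h2 : ∫ s in R0 κ..R1 κ, PhiF κ s / phiF κ s = ∫ s in R0 κ..R1 κ, (A + (s - R0 κ)) := by
    apply intervalIntegral.integral_congr
    intro s hs
    rw [uIcc_of_le hR01] at hs
    show PhiF κ s / phiF κ s = A + (s - R0 κ)
    rw [Phi_affine hκcont hκliminf hs.1, phi_const hκcont hκliminf hs.1, hA]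
    have hp : phiF κ (R0 κ) ≠ 0 := (phi_pos κ (R0 κ)).ne'
    field_simp
  have h3 : ∫ s in R0 κ..R1 κ, (A + (s - R0 κ)) =
      (R1 κ - R0 κ) * A + (R1 κ - R0 κ)^2/2 := by
    have : (∫ s in R0 κ..R1 κ, (A + (s - R0 κ))) =
        ∫ s in R0 κ..R1 κ, ((A - R0 κ) + s) := by
      congr 1; funext s; ring
    rw [this, intervalIntegral.integral_add (f := fun _ => A - R0 κ) (g := fun s => s)
      (_root_.intervalIntegrable_const) (continuous_id'.intervalIntegrable _ _)]
    rw [integral_id, intervalIntegral.integral_const]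
    simp only [smul_eq_mul]
    ring
  rw [hsplit, h2, h3]
  linarith

end Aux2

section Aux3

open intervalIntegral Filter Topology

variable {κ : ℝ → ℝ}

lemma J_nonneg {m : ℝ} (hm0 : 0 ≤ m) : 0 ≤ ∫ s in (0:ℝ)..m, PhiF κ s / phiF κ s :=
  intervalIntegral.integral_nonneg hm0 (fun s hs => q_nonneg hs.1)

lemma J_le_K (hκcont : ContinuousOn κ (Set.Ici 0)) {m : ℝ} (hm0 : 0 ≤ m) (hm1 : m ≤ R1 κ) :
    (∫ s in (0:ℝ)..m, PhiF κ s / phiF κ s) ≤ ∫ s in (0:ℝ)..R1 κ, PhiF κ s / phiF κ s := by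
  have hR1 : 0 ≤ R1 κ := le_trans hm0 hm1
  have hsplit : (∫ s in (0:ℝ)..R1 κ, PhiF κ s / phiF κ s) =
      (∫ s in (0:ℝ)..m, PhiF κ s / phiF κ s) + ∫ s in m..R1 κ, PhiF κ s / phiF κ s :=
    (integral_add_adjacent_intervals (intable (q_contOn hκcont) le_rfl hm0)
      (intable (q_contOn hκcont) hm0 hR1)).symm
  have hnn : 0 ≤ ∫ s in m..R1 κ, PhiF κ s / phiF κ s :=
    intervalIntegral.integral_nonneg hm1 (fun s hs => q_nonneg (le_trans hm0 hs.1))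
  linarith

lemma g_ge_half (hκcont : ContinuousOn κ (Set.Ici 0)) (hR1 : 0 < R1 κ) {r : ℝ} (hr : 0 ≤ r) :
    1/2 ≤ gF κ r := by
  have hK := K_pos hκcont hR1
  have hm0 : 0 ≤ min r (R1 κ) := le_min hr hR1.le
  have hJK := J_le_K hκcont hm0 (min_le_right _ _)
  have hJ0 := J_nonneg (κ := κ) hm0
  unfold gF cF
  have h1 : (∫ s in (0:ℝ)..R1 κ, PhiF κ s / phiF κ s)⁻¹ / 2 *
      (∫ s in (0:ℝ)..min r (R1 κ), PhiF κ s / phiF κ s) ≤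
      (∫ s in (0:ℝ)..R1 κ, PhiF κ s / phiF κ s)⁻¹ / 2 *
      (∫ s in (0:ℝ)..R1 κ, PhiF κ s / phiF κ s) :=
    mul_le_mul_of_nonneg_left hJK (by positivity)
  rw [div_mul_eq_mul_div, div_mul_eq_mul_div, inv_mul_cancel₀ hK.ne'] at h1
  linarith

lemma g_le_one (hκcont : ContinuousOn κ (Set.Ici 0)) (hR1 : 0 < R1 κ) {r : ℝ} (hr : 0 ≤ r) :
    gF κ r ≤ 1 := by
  have hK := K_pos hκcont hR1
  have hm0 : 0 ≤ min r (R1 κ) := le_min hr hR1.le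
  have hJ0 := J_nonneg (κ := κ) hm0
  unfold gF cF
  nlinarith [inv_pos.2 hK]

lemma g_eq_half (hκcont : ContinuousOn κ (Set.Ici 0)) (hR1 : 0 < R1 κ) {r : ℝ}
    (hr : R1 κ ≤ r) : gF κ r = 1/2 := by
  have hK := K_pos hκcont hR1
  unfold gF cF
  rw [min_eq_right hr, div_mul_eq_mul_div, inv_mul_cancel₀ hK.ne']
  norm_num

lemma g_contOn (hκcont : ContinuousOn κ (Set.Ici 0)) (hR1 : 0 < R1 κ) :
    ContinuousOn (gF κ) (Ici 0) := by
  have hJ : ContinuousOn (fun u => ∫ s in (0:ℝ)..u, PhiF κ s / phiF κ s) (Ici 0) :=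
    primitive_contOn (q_contOn hκcont)
  have hmin : ContinuousOn (fun r : ℝ => min r (R1 κ)) (Ici 0) :=
    (continuous_id.min continuous_const).continuousOn
  have hcomp : ContinuousOn (fun r => ∫ s in (0:ℝ)..min r (R1 κ), PhiF κ s / phiF κ s) (Ici 0) :=
    hJ.comp hmin (fun x hx => le_min hx hR1.le)
  exact continuousOn_const.sub (continuousOn_const.mul hcomp)

lemma phig_contOn (hκcont : ContinuousOn κ (Set.Ici 0)) (hR1 : 0 < R1 κ) :
    ContinuousOn (fun s => phiF κ s * gF κ s) (Ici 0) :=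
  (phi_contOn hκcont).mul (g_contOn hκcont hR1)

lemma f_le_Phi (hκcont : ContinuousOn κ (Set.Ici 0)) (hR1 : 0 < R1 κ) {r : ℝ} (hr : 0 ≤ r) :
    fF κ r ≤ PhiF κ r := by
  apply intervalIntegral.integral_mono_on hr
    (intable (phig_contOn hκcont hR1) le_rfl hr) (intable (phi_contOn hκcont) le_rfl hr)
  intro s hs
  have hg := g_le_one hκcont hR1 hs.1
  nlinarith [phi_pos κ s]

end Aux3


lemma arith2 {R0' R1' r p F0 K k f : ℝ} (h0 : 0 ≤ R0') (h01 : R0' < R1') (h1r : R1' < r)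
    (hp : 0 < p) (hF0n : 0 ≤ F0) (hF0 : R0' * p ≤ F0) (hk : 0 ≤ k)
    (hk8 : 8 ≤ R1' * (R1' - R0') * k) (hKp : (R1' - R0') * F0 + (R1' - R0')^2/2 * p ≤ K * p)
    (hf : f ≤ F0 + (r - R0') * p) : 4 * f ≤ K * (r * k * p) := by
  have hC : 0 < R1' * (R1' - R0') := by nlinarith
  have hrk : 0 ≤ r * k := mul_nonneg (by linarith) hk
  have hbr : 0 ≤ (R1' - R0') * F0 + (R1' - R0')^2/2 * p := by nlinarith
  have b1 : ((R1' - R0') * F0 + (R1' - R0')^2/2 * p) * (r * k) ≤ (K * p) * (r * k) :=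
    mul_le_mul_of_nonneg_right hKp hrk
  have b2 : 8 * r ≤ (R1' * (R1' - R0')) * (r * k) := by
    have h := mul_le_mul_of_nonneg_left hk8 (show (0:ℝ) ≤ r by linarith)
    nlinarith
  have a1 : 4 * (F0 + (r - R0') * p) * (R1' * (R1' - R0')) ≤
      8 * r * ((R1' - R0') * F0 + (R1' - R0')^2/2 * p) := by
    nlinarith [mul_nonneg (sub_nonneg.2 h1r.le) hF0n,
      mul_nonneg (mul_nonneg (by linarith : (0:ℝ) ≤ r) (sub_nonneg.2 hF0))
        (by linarith : (0:ℝ) ≤ R1' - R0'),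
      mul_nonneg (mul_nonneg (by linarith : (0:ℝ) ≤ R1') h0) hp.le,
      mul_nonneg (mul_nonneg (mul_nonneg (by linarith : (0:ℝ) ≤ R1') h0) hp.le)
        (by linarith : (0:ℝ) ≤ R1' - R0'),
      mul_nonneg (mul_nonneg (sub_nonneg.2 h1r.le) hF0n) (by linarith : (0:ℝ) ≤ R1' - R0')]
  have c2 : 8 * r * ((R1' - R0') * F0 + (R1' - R0')^2/2 * p) ≤
      ((R1' * (R1' - R0')) * (r * k)) * ((R1' - R0') * F0 + (R1' - R0')^2/2 * p) :=
    mul_le_mul_of_nonneg_right b2 hbr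
  have b3 : 4 * f * (R1' * (R1' - R0')) ≤ K * (r * k * p) * (R1' * (R1' - R0')) := by
    have c1 : 4 * f * (R1' * (R1' - R0')) ≤ 4 * (F0 + (r - R0') * p) * (R1' * (R1' - R0')) := by
      nlinarith
    nlinarith [b1]
  exact le_of_mul_le_mul_right b3 hC

open intervalIntegral Filter Topology

/-- for every `r ≥ 0` with `r ≠ R₁`, the function `f` is twice differentiable at `r`
(differentiability within `[0,∞)`, i.e. one-sided at `r = 0`), with first derivative
`f'(r) = φ(r) g(r)`, and the second derivative `f''(r)` satisfies
`f''(r) − r κ(r) f'(r)/4 ≤ −c f(r)/2`. -/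
theorem stmt6 (κ : ℝ → ℝ) (hκcont : ContinuousOn κ (Set.Ici 0))
    (hκliminf : ∃ ε > (0 : ℝ), ∃ R : ℝ, ∀ r ≥ R, ε ≤ κ r) (hR1 : 0 < R1 κ) :
    ∀ r : ℝ, 0 ≤ r → r ≠ R1 κ →
      HasDerivWithinAt (fF κ) (phiF κ r * gF κ r) (Set.Ici 0) r ∧
      ∃ f2 : ℝ, HasDerivWithinAt (fun s => phiF κ s * gF κ s) f2 (Set.Ici 0) r ∧
        f2 - r * κ r * (phiF κ r * gF κ r) / 4 ≤ -(cF κ) * fF κ r / 2 := by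
  intro r hr hne
  have hK := K_pos hκcont hR1
  have hcK : cF κ = (∫ s in (0:ℝ)..R1 κ, PhiF κ s / phiF κ s)⁻¹ := rfl
  have hcpos : 0 < cF κ := by rw [hcK]; exact inv_pos.2 hK
  have hf1 : HasDerivWithinAt (fF κ) (phiF κ r * gF κ r) (Set.Ici 0) r :=
    primitive_hasDerivWithinAt (phig_contOn hκcont hR1) hr
  refine ⟨hf1, ?_⟩
  have hphi' := phi_hasDeriv hκcont hr
  have hphipos := phi_pos κ r
  have hghalf := g_ge_half hκcont hR1 hr
  have hfle := f_le_Phi hκcont hR1 hr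
  rcases lt_or_gt_of_ne hne with hlt | hgt
  · -- r < R1
    have hgderiv : HasDerivWithinAt (gF κ) (-(cF κ/2 * (PhiF κ r / phiF κ r))) (Set.Ici 0) r := by
      have hbase : HasDerivWithinAt
          (fun s => 1 - cF κ/2 * ∫ t in (0:ℝ)..s, PhiF κ t / phiF κ t)
          (-(cF κ/2 * (PhiF κ r / phiF κ r))) (Set.Ici 0) r := by
        have h := (primitive_hasDerivWithinAt (q_contOn hκcont) hr).const_mul (cF κ/2)
        have h2 := (hasDerivWithinAt_const r (Set.Ici (0:ℝ)) (1:ℝ)).sub h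
        simpa [Pi.sub_def] using h2
      refine hbase.congr_of_eventuallyEq ?_ ?_
      · filter_upwards [mem_nhdsWithin_of_mem_nhds (Iio_mem_nhds hlt)] with s hs
        have hs' : s < R1 κ := hs
        simp only [gF, min_eq_left hs'.le]
      · simp only [gF, min_eq_left hlt.le]
    have hmul := hphi'.mul hgderiv
    refine ⟨_, hmul, ?_⟩
    have hq : phiF κ r * (cF κ/2 * (PhiF κ r / phiF κ r)) = cF κ/2 * PhiF κ r := by
      field_simp
    have hmax : 0 ≤ max 0 (-κ r) + κ r := by
      have := le_max_right 0 (-κ r); linarith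
    have h1 : 0 ≤ 1/4 * (r * (max 0 (-κ r) + κ r)) * (phiF κ r * gF κ r) := by
      have hpg : 0 ≤ phiF κ r * gF κ r := mul_nonneg hphipos.le (by linarith)
      have := mul_nonneg hr hmax
      nlinarith
    have h2 : cF κ/2 * fF κ r ≤ cF κ/2 * PhiF κ r :=
      mul_le_mul_of_nonneg_left hfle (by positivity)
    nlinarith [h1, h2, hq]
  · -- r > R1
    have hgderiv : HasDerivWithinAt (gF κ) 0 (Set.Ici 0) r := by
      refine (hasDerivWithinAt_const r (Set.Ici (0:ℝ)) (1/2:ℝ)).congr_of_eventuallyEq ?_ ?_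
      · filter_upwards [mem_nhdsWithin_of_mem_nhds (Ioi_mem_nhds hgt)] with s hs
        have hs' : R1 κ < s := hs
        exact g_eq_half hκcont hR1 hs'.le
      · exact g_eq_half hκcont hR1 hgt.le
    have hmul := hphi'.mul hgderiv
    refine ⟨_, hmul, ?_⟩
    have hR01 := R0_lt_R1 (κ := κ) hκliminf
    have hR0n := R0_nonneg (κ := κ) hκliminf
    have hrR0 : R0 κ ≤ r := by linarith
    have hκr : 0 ≤ κ r := kappa_nonneg_ge hκcont hκliminf hrR0
    have hmax0 : max 0 (-κ r) = 0 := max_eq_left (by linarith)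
    have hghalf2 : gF κ r = 1/2 := g_eq_half hκcont hR1 hgt.le
    have hphir : phiF κ r = phiF κ (R0 κ) := phi_const hκcont hκliminf hrR0
    have hPhir : PhiF κ r = PhiF κ (R0 κ) + (r - R0 κ) * phiF κ (R0 κ) :=
      Phi_affine hκcont hκliminf hrR0
    have hKge := K_ge hκcont hκliminf
    have hF0 := PhiR0_ge hκcont hκliminf
    have hk8 := key_kappa hκliminf hgt
    have hp : (0:ℝ) < phiF κ (R0 κ) := phi_pos κ _
    have hF0n : 0 ≤ PhiF κ (R0 κ) := Phi_nonneg hR0n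
    obtain ⟨K, hKdef⟩ : ∃ K, (∫ s in (0:ℝ)..R1 κ, PhiF κ s / phiF κ s) = K := ⟨_, rfl⟩
    obtain ⟨p, hpdef⟩ : ∃ p, phiF κ (R0 κ) = p := ⟨_, rfl⟩
    obtain ⟨F0, hF0def⟩ : ∃ F0, PhiF κ (R0 κ) = F0 := ⟨_, rfl⟩
    obtain ⟨f0, hf0def⟩ : ∃ f0, fF κ r = f0 := ⟨_, rfl⟩
    rw [hKdef] at hK hcK hKge
    simp only [hpdef, hF0def] at hKge hF0 hPhir hphir hF0n hp
    rw [hf0def] at hfle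
    rw [hPhir] at hfle
    have hdiv : F0 / p * p = F0 := div_mul_cancel₀ _ hp.ne'
    have hKp : (R1 κ - R0 κ) * F0 + (R1 κ - R0 κ)^2/2 * p ≤ K * p := by
      have h := mul_le_mul_of_nonneg_right hKge hp.le
      rw [add_mul, mul_assoc, hdiv] at h
      linarith
    have hmain : 4 * f0 ≤ K * (r * κ r * p) :=
      arith2 hR0n hR01 hgt hp hF0n hF0 hκr hk8 hKp hfle
    rw [hmax0, hghalf2, hphir, hcK, hf0def]
    have h5 := mul_le_mul_of_nonneg_left hmain (le_of_lt (inv_pos.2 hK))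
    rw [show K⁻¹ * (K * (r * κ r * p)) = K⁻¹ * K * (r * κ r * p) by ring,
      inv_mul_cancel₀ hK.ne', one_mul] at h5
    linarith
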